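/- (Converse, part 3) Consider random variables $\underline{V}_{\mathcal{K}_s}, \underline{V}_{\mathcal{K}_w}$ (independent message blocks), a seed $\underline{U}$ independent of the messages with $H(\underline{U}) = \ell d_n \leq \ell n \epsilon_d$, an encoding $\underline{X}$ that is a deterministic function of $(\underline{V}_{\mathcal{K}_s}, \underline{V}_{\mathcal{K}_w}, \underline{U})$, and an eavesdropper observation $\underline{Z}$ that is a deterministic function of $\underline{X}$ (noiseless channel). If the scheme is individually secure, $I(\underline{V}_{\mathcal{K}_s}; \underline{Z}) \leq \epsilon_s$, then $H(\underline{V}_{\mathcal{K}_w}) \geq I(\underline{X}; \underline{Z}) - \epsilon_s - \ell n \epsilon_d$. -/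
import Mathlib


open Finset Real

variable {Ω : Type*} [Fintype Ω]

/-- Distribution of a random variable `X` on a finite sample space with pmf `μ`. -/
noncomputable def distOf {α : Type*} [Fintype α] [DecidableEq α]
    (μ : Ω → ℝ) (X : Ω → α) : α → ℝ :=
  fun a => ∑ ω ∈ Finset.univ.filter (fun ω => X ω = a), μ ω

/-- Shannon entropy (in bits) of a random variable. -/
noncomputable def entRV {α : Type*} [Fintype α] [DecidableEq α]
    (μ : Ω → ℝ) (X : Ω → α) : ℝ :=
  ∑ a, -(distOf μ X a * Real.logb 2 (distOf μ X a))

/-- Mutual information (in bits) of two random variables. -/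
noncomputable def mutInf {α β : Type*} [Fintype α] [DecidableEq α]
    [Fintype β] [DecidableEq β] (μ : Ω → ℝ) (X : Ω → α) (Z : Ω → β) : ℝ :=
  entRV μ X + entRV μ Z - entRV μ (fun ω => (X ω, Z ω))

section AuxEntropy

variable {Ω : Type*} [Fintype Ω]

/-- The summand of bit-entropy. -/
noncomputable def myF (x : ℝ) : ℝ := -(x * Real.logb 2 x)

lemma myF_zero : myF 0 = 0 := by simp [myF]

lemma myF_mul (x y : ℝ) : myF (x * y) = y * myF x + x * myF y := by
  rcases eq_or_ne x 0 with hx | hx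
  · simp [hx, myF]
  rcases eq_or_ne y 0 with hy | hy
  · simp [hy, myF]
  · simp only [myF, Real.logb_mul hx hy]; ring

lemma myF_ge {x s : ℝ} (h0 : 0 ≤ x) (hxs : x ≤ s) :
    -(x * Real.logb 2 s) ≤ myF x := by
  rcases eq_or_lt_of_le h0 with h | h
  · simp [← h, myF]
  · have h1 : Real.logb 2 x ≤ Real.logb 2 s :=
      Real.logb_le_logb_of_le (by norm_num) h hxs
    have h2 : x * Real.logb 2 x ≤ x * Real.logb 2 s :=
      mul_le_mul_of_nonneg_left h1 h0
    simpa [myF] using neg_le_neg h2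

lemma entRV_eq {α : Type*} [Fintype α] [DecidableEq α] (μ : Ω → ℝ) (X : Ω → α) :
    entRV μ X = ∑ a, myF (distOf μ X a) := rfl

lemma distOf_nonneg {α : Type*} [Fintype α] [DecidableEq α] (μ : Ω → ℝ)
    (hμ0 : ∀ ω, 0 ≤ μ ω) (X : Ω → α) (a : α) : 0 ≤ distOf μ X a :=
  Finset.sum_nonneg fun ω _ => hμ0 ω

lemma sum_distOf {α : Type*} [Fintype α] [DecidableEq α] (μ : Ω → ℝ)
    (hμ1 : ∑ ω, μ ω = 1) (X : Ω → α) : ∑ a, distOf μ X a = 1 := by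
  classical
  simp only [distOf]
  rw [Finset.sum_fiberwise Finset.univ X μ, hμ1]

lemma distOf_comp {α β : Type*} [Fintype α] [DecidableEq α] [Fintype β] [DecidableEq β]
    (μ : Ω → ℝ) (φ : α → β) (X : Ω → α) (b : β) :
    distOf μ (fun ω => φ (X ω)) b
      = ∑ a ∈ Finset.univ.filter (fun a => φ a = b), distOf μ X a := by
  classical
  have h := Finset.sum_fiberwise_of_maps_to
    (s := Finset.univ.filter (fun ω => φ (X ω) = b))
    (t := Finset.univ.filter (fun a => φ a = b)) (g := X)
    (fun ω hω => by
      simp only [Finset.mem_filter, Finset.mem_univ, true_and] at hω ⊢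
      exact hω) μ
  calc distOf μ (fun ω => φ (X ω)) b
      = ∑ ω ∈ Finset.univ.filter (fun ω => φ (X ω) = b), μ ω := rfl
    _ = ∑ a ∈ Finset.univ.filter (fun a => φ a = b),
          ∑ ω ∈ (Finset.univ.filter (fun ω => φ (X ω) = b)).filter
            (fun ω => X ω = a), μ ω := h.symm
    _ = ∑ a ∈ Finset.univ.filter (fun a => φ a = b), distOf μ X a := by
        refine Finset.sum_congr rfl fun a ha => ?_
        simp only [Finset.mem_filter, Finset.mem_univ, true_and] at ha
        unfold distOf
        congr 1
        rw [Finset.filter_filter]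
        ext ω
        simp only [Finset.mem_filter, Finset.mem_univ, true_and]
        exact ⟨fun h => h.2, fun h => ⟨by rw [h, ha], h⟩⟩

/-- Entropy does not increase under a deterministic function. -/
lemma entRV_comp_le {α β : Type*} [Fintype α] [DecidableEq α] [Fintype β] [DecidableEq β]
    (μ : Ω → ℝ) (hμ0 : ∀ ω, 0 ≤ μ ω) (φ : α → β) (X : Ω → α) :
    entRV μ (fun ω => φ (X ω)) ≤ entRV μ X := by
  classical
  rw [entRV_eq, entRV_eq, ← Finset.sum_fiberwise Finset.univ φ
    (fun a => myF (distOf μ X a))]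
  refine Finset.sum_le_sum fun b _ => ?_
  rw [distOf_comp]
  set q : ℝ := ∑ a ∈ Finset.univ.filter (fun a => φ a = b), distOf μ X a with hq
  have step : myF q = ∑ a ∈ Finset.univ.filter (fun a => φ a = b),
      -(distOf μ X a * Real.logb 2 q) := by
    simp only [myF, hq, Finset.sum_mul, ← Finset.sum_neg_distrib]
  rw [step]
  refine Finset.sum_le_sum fun a ha => ?_
  refine myF_ge (distOf_nonneg μ hμ0 X a) ?_
  exact Finset.single_le_sum (fun a' _ => distOf_nonneg μ hμ0 X a') ha

/-- Entropy is invariant under an injective recoding. -/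
lemma entRV_comp_inj {α β : Type*} [Fintype α] [DecidableEq α] [Fintype β] [DecidableEq β]
    (μ : Ω → ℝ) (φ : α → β) (hφ : Function.Injective φ) (X : Ω → α) :
    entRV μ (fun ω => φ (X ω)) = entRV μ X := by
  classical
  rw [entRV_eq, entRV_eq]
  have hzero : ∀ b ∈ Finset.univ, b ∉ Finset.univ.image φ →
      myF (distOf μ (fun ω => φ (X ω)) b) = 0 := by
    intro b _ hb
    have : Finset.univ.filter (fun a => φ a = b) = ∅ := by
      ext a
      simp only [Finset.mem_filter, Finset.mem_univ, true_and, Finset.notMem_empty,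
        iff_false]
      intro h
      exact hb (Finset.mem_image.2 ⟨a, Finset.mem_univ a, h⟩)
    rw [distOf_comp, this, Finset.sum_empty, myF_zero]
  rw [← Finset.sum_subset (Finset.subset_univ (Finset.univ.image φ)) hzero,
    Finset.sum_image (fun a _ a' _ h => hφ h)]
  refine Finset.sum_congr rfl fun a _ => ?_
  congr 1
  rw [distOf_comp]
  have : Finset.univ.filter (fun a' => φ a' = φ a) = {a} := by
    ext a'
    simp [hφ.eq_iff]
  rw [this, Finset.sum_singleton]

lemma sum_myF_mul {α β : Type*} [Fintype α] [Fintype β] (p : α → ℝ) (q : β → ℝ)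
    (hp : ∑ a, p a = 1) (hq : ∑ b, q b = 1) :
    ∑ a, ∑ b, myF (p a * q b) = ∑ a, myF (p a) + ∑ b, myF (q b) := by
  have : ∀ a, ∑ b, myF (p a * q b) = myF (p a) + p a * ∑ b, myF (q b) := by
    intro a
    simp only [myF_mul, Finset.sum_add_distrib, ← Finset.sum_mul, ← Finset.mul_sum, hq,
      one_mul]
  simp only [this, Finset.sum_add_distrib, ← Finset.sum_mul, hp, one_mul]

end AuxEntropy


/-- Converse, part 3: with mutually independent message blocks and seed, deterministic
encoding `X` and noiseless eavesdropper observation `Z = g(X)`, individual security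
`I(V_Ks; Z) ≤ ε_s` forces `H(V_Kw) ≥ I(X; Z) - ε_s - ℓ n ε_d`. -/
theorem converse_part_three
    {A B C XT ZT : Type*}
    [Fintype A] [DecidableEq A] [Fintype B] [DecidableEq B] [Fintype C] [DecidableEq C]
    [Fintype XT] [DecidableEq XT] [Fintype ZT] [DecidableEq ZT]
    (μ : Ω → ℝ) (hμ0 : ∀ ω, 0 ≤ μ ω) (hμ1 : ∑ ω, μ ω = 1)
    (Vs : Ω → A) (Vw : Ω → B) (U : Ω → C)
    (hindep : ∀ a b c, distOf μ (fun ω => (Vs ω, Vw ω, U ω)) (a, b, c)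
        = distOf μ Vs a * distOf μ Vw b * distOf μ U c)
    (f : A → B → C → XT) (g : XT → ZT)
    (X : Ω → XT) (hX : ∀ ω, X ω = f (Vs ω) (Vw ω) (U ω))
    (Z : Ω → ZT) (hZ : ∀ ω, Z ω = g (X ω))
    (l n d εd εs : ℝ)
    (hUent : entRV μ U = l * d) (hseed : l * d ≤ l * n * εd)
    (hsec : mutInf μ Vs Z ≤ εs) :
    entRV μ Vw ≥ mutInf μ X Z - εs - l * n * εd := by
  classical
  -- H(X, Z) = H(X) since Z = g(X) (injective recoding x ↦ (x, g x))
  have hXZfun : (fun ω => (X ω, Z ω)) = fun ω => (fun x : XT => (x, g x)) (X ω) :=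
    funext fun ω => by rw [hZ]
  have hinj : Function.Injective (fun x : XT => (x, g x)) := fun x y h =>
    congrArg Prod.fst h
  have h1 : entRV μ (fun ω => (X ω, Z ω)) = entRV μ X := by
    rw [hXZfun]; exact entRV_comp_inj μ _ hinj X
  -- H(Vs, Z) ≤ H(Vs, Vw, U) since (Vs, Z) is a function of (Vs, Vw, U)
  have hVsZfun : (fun ω => (Vs ω, Z ω))
      = fun ω => (fun t : A × B × C => (t.1, g (f t.1 t.2.1 t.2.2)))
        ((fun ω => (Vs ω, Vw ω, U ω)) ω) :=
    funext fun ω => by simp only [hZ ω, hX ω]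
  have h2 : entRV μ (fun ω => (Vs ω, Z ω))
      ≤ entRV μ (fun ω => (Vs ω, Vw ω, U ω)) := by
    have h2' := entRV_comp_le μ hμ0
      (fun t : A × B × C => (t.1, g (f t.1 t.2.1 t.2.2)))
      (fun ω => (Vs ω, Vw ω, U ω))
    rw [← hVsZfun] at h2'
    exact h2'
  -- independence: H(Vs, Vw, U) = H(Vs) + H(Vw) + H(U)
  have hp1 : ∑ a, distOf μ Vs a = 1 := sum_distOf μ hμ1 Vs
  have hq1 : ∑ b, distOf μ Vw b = 1 := sum_distOf μ hμ1 Vw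
  have hr1 : ∑ c, distOf μ U c = 1 := sum_distOf μ hμ1 U
  have hs1 : ∑ y : B × C, distOf μ Vw y.1 * distOf μ U y.2 = 1 := by
    rw [Fintype.sum_prod_type]
    simp only [← Finset.mul_sum, hr1, mul_one, hq1]
  have h3 : entRV μ (fun ω => (Vs ω, Vw ω, U ω))
      = entRV μ Vs + entRV μ Vw + entRV μ U := by
    have key : ∀ (a : A) (y : B × C),
        distOf μ (fun ω => (Vs ω, Vw ω, U ω)) (a, y)
          = distOf μ Vs a * (distOf μ Vw y.1 * distOf μ U y.2) := by
      intro a y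
      have h := hindep a y.1 y.2
      rw [mul_assoc] at h
      simpa using h
    calc entRV μ (fun ω => (Vs ω, Vw ω, U ω))
        = ∑ a, ∑ y : B × C,
            myF (distOf μ (fun ω => (Vs ω, Vw ω, U ω)) (a, y)) := by
          rw [entRV_eq, Fintype.sum_prod_type]
      _ = ∑ a, ∑ y : B × C,
            myF (distOf μ Vs a * (distOf μ Vw y.1 * distOf μ U y.2)) := by
          simp only [key]
      _ = ∑ a, myF (distOf μ Vs a)
            + ∑ y : B × C, myF (distOf μ Vw y.1 * distOf μ U y.2) :=
          sum_myF_mul _ _ hp1 hs1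
      _ = ∑ a, myF (distOf μ Vs a)
            + (∑ b, myF (distOf μ Vw b) + ∑ c, myF (distOf μ U c)) := by
          rw [Fintype.sum_prod_type, sum_myF_mul _ _ hq1 hr1]
      _ = entRV μ Vs + entRV μ Vw + entRV μ U := by
          rw [entRV_eq μ Vs, entRV_eq μ Vw, entRV_eq μ U]; ring
  have hmi : mutInf μ X Z = entRV μ Z := by
    rw [mutInf, h1]; ring
  rw [mutInf] at hsec
  rw [hmi]
  linarith [h2, h3, hsec, hUent, hseed]
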